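/- In a labelled CFG, if v' postdominates v, v stays outside Q until v', and Q is closed under data dependence, then rv(Q,v) = rv(Q,v'). -/

import Mathlib

namespace Slicing

/-- A path is a nonempty list of nodes, consecutive ones related by `succ`,
starting at `v` and ending at `v'`. -/
def IsPath {V : Type} (succ : V → V → Prop) (p : List V) (v v' : V) : Prop :=
  p.Chain' succ ∧ p.head? = some v ∧ p.getLast? = some v'

/-- A control-flow graph: an edge relation and an `End` node with no successors,
reachable from every node. -/
structure CFG (V : Type) where
  succ : V → V → Prop
  End : V
  end_no_succ : ∀ w, ¬ succ End w
  reach_end : ∀ v, ∃ p, IsPath succ p v End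

variable {V : Type}

/-- `v1` postdominates `v`. -/
def PD (G : CFG V) (v v1 : V) : Prop :=
  ∀ p, IsPath G.succ p v G.End → v1 ∈ p

/-- `v1` is a proper postdominator of `v`. -/
def ProperPD (G : CFG V) (v v1 : V) : Prop :=
  PD G v v1 ∧ v1 ≠ v

/-- `v1` is a first proper postdominator of `v`: every path from `v` to any other
proper postdominator of `v` contains `v1`. -/
def IsFPPD (G : CFG V) (v v1 : V) : Prop :=
  ProperPD G v v1 ∧
    ∀ v2, ProperPD G v v2 → v2 ≠ v1 → ∀ p, IsPath G.succ p v v2 → v1 ∈ p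

/-- Maximum number of edges of an acyclic path from `v` to `v'`. -/
noncomputable def LAP (G : CFG V) (v v' : V) : ℕ :=
  sSup {n | ∃ p, IsPath G.succ p v v' ∧ p.Nodup ∧ p.length = n + 1}

/-- A node is cycle-inducing if, with `v'` its first proper postdominator,
some successor `vi` of `v` satisfies `LAP vi v' ≥ LAP v v'`. -/
def CycleInducing (G : CFG V) (v : V) : Prop :=
  ∃ v', IsFPPD G v v' ∧ ∃ vi, G.succ v vi ∧ LAP G v v' ≤ LAP G vi v'

/-- `v` stays outside `Q` until `v'`: every path from `v` to `v'` in which `v'`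
occurs only at the final position contains no node of `Q` except possibly `v'`. -/
def StaysOutside (G : CFG V) (Q : Set V) (v v' : V) : Prop :=
  ∀ p, IsPath G.succ p v v' → v' ∉ p.dropLast → ∀ w ∈ p, w ∈ Q → w = v'

/-- `v2` is data dependent on `v1`. -/
def DataDep {Var : Type} (G : CFG V) (Def Use : V → Set Var) (v1 v2 : V) : Prop :=
  ∃ x, x ∈ Use v2 ∧ x ∈ Def v1 ∧
    ∃ p, IsPath G.succ p v1 v2 ∧ 2 ≤ p.length ∧ ∀ w ∈ p.tail.dropLast, x ∉ Def w

/-- `Q` is closed under data dependence. -/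
def ClosedDD {Var : Type} (G : CFG V) (Def Use : V → Set Var) (Q : Set V) : Prop :=
  ∀ v1 v2, v2 ∈ Q → DataDep G Def Use v1 v2 → v1 ∈ Q

/-- The `Q`-relevant variables at `v`. -/
def rv {Var : Type} (G : CFG V) (Def Use : V → Set Var) (Q : Set V) (v : V) : Set Var :=
  {x | ∃ v' ∈ Q, x ∈ Use v' ∧
    ∃ p, IsPath G.succ p v v' ∧ p.Nodup ∧ ∀ w ∈ p, w ≠ v' → x ∉ Def w}

/-- `v'` is a next visible in `Q` of `v`. -/
def IsNextVisible (G : CFG V) (Q : Set V) (v v' : V) : Prop :=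
  (v' ∈ Q ∨ v' = G.End) ∧
    ∀ u, (u ∈ Q ∨ u = G.End) → ∀ p, IsPath G.succ p v u → v' ∈ p

/-- `Q` provides next visibles. -/
def ProvidesNextVisibles (G : CFG V) (Q : Set V) : Prop :=
  ∀ v, ∃ v', IsNextVisible G Q v v'

/-- A weak slice set provides next visibles and is closed under data dependence. -/
def WeakSliceSet {Var : Type} (G : CFG V) (Def Use : V → Set Var) (Q : Set V) : Prop :=
  ProvidesNextVisibles G Q ∧ ClosedDD G Def Use Q

end Slicing

namespace Slicing

variable {V : Type} {succ : V → V → Prop}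

lemma IsPath.ne_nil {p : List V} {v v' : V} (h : IsPath succ p v v') : p ≠ [] := by
  rcases h with ⟨-, h, -⟩; intro hn; simp [hn] at h

lemma IsPath.head_mem {p : List V} {v v' : V} (h : IsPath succ p v v') : v ∈ p :=
  List.mem_of_mem_head? (by rw [h.2.1]; rfl)

lemma IsPath.last_mem {p : List V} {v v' : V} (h : IsPath succ p v v') : v' ∈ p := by
  have h2 := h.2.2
  rw [List.getLast?_eq_getLast h.ne_nil, Option.some_inj] at h2
  rw [← h2]; exact List.getLast_mem _

lemma mem_split_first {a : V} {l : List V} (h : a ∈ l) :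
    ∃ l1 l2, l = l1 ++ a :: l2 ∧ a ∉ l1 := by
  induction l with
  | nil => simp at h
  | cons b t ih =>
    by_cases hb : a = b
    · exact ⟨[], t, by simp [hb], by simp⟩
    · have ht : a ∈ t := by
        rcases List.mem_cons.mp h with h' | h'
        · exact absurd h' hb
        · exact h'
      obtain ⟨l1, l2, he, hn⟩ := ih ht
      exact ⟨b :: l1, l2, by simp [he], by simp [hn, hb]⟩

lemma IsPath.append {p q : List V} {v w u : V}
    (hp : IsPath succ p v w) (hq : IsPath succ q w u) : IsPath succ (p ++ q.tail) v u := by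
  obtain ⟨hc, hh, hl⟩ := hq
  have hqe : q ≠ [] := by intro hn; simp [hn] at hh
  obtain ⟨b, t, rfl⟩ := List.exists_cons_of_ne_nil hqe
  have hb : w = b := by simpa using hh.symm
  subst hb
  cases t with
  | nil =>
    have hu : u = w := by simpa using hl.symm
    subst hu
    simpa using hp
  | cons c t' =>
    refine ⟨?_, ?_, ?_⟩
    · unfold List.Chain'; rw [List.isChain_append]
      refine ⟨hp.1, hc.tail, ?_⟩
      intro x hx y hy
      rw [hp.2.2] at hx
      simp only [Option.mem_def, Option.some_inj] at hx
      simp only [List.tail_cons, List.head?_cons, Option.mem_def, Option.some_inj] at hy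
      subst hx; subst hy
      exact (List.isChain_cons_cons.mp hc).1
    · rw [List.head?_append, hp.2.1]; rfl
    · rw [List.tail_cons, List.getLast?_append]
      have h3 : (c :: t').getLast? = some u := by
        rw [← List.getLast?_cons_cons (a := w)]; exact hl
      rw [h3]; rfl

lemma isPath_prefix {p l1 l2 : List V} {v v' w : V}
    (hp : IsPath succ p v w) (he : p = l1 ++ v' :: l2) : IsPath succ (l1 ++ [v']) v v' := by
  refine ⟨?_, ?_, List.getLast?_concat⟩
  · exact hp.1.prefix (by rw [he]; exact ⟨l2, by simp⟩)
  · have h1 := hp.2.1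
    rw [he, List.head?_append] at h1
    rw [List.head?_append]
    cases l1 with
    | nil => simpa using h1
    | cons a t => simpa using h1

lemma isPath_suffix {p l1 l2 : List V} {v v' w : V}
    (hp : IsPath succ p v w) (he : p = l1 ++ v' :: l2) : IsPath succ (v' :: l2) v' w := by
  refine ⟨hp.1.suffix (by rw [he]; exact ⟨l1, rfl⟩), rfl, ?_⟩
  have h2 := hp.2.2
  rw [he, List.getLast?_append] at h2
  have hgl := List.getLast?_eq_getLast (show v' :: l2 ≠ [] by simp)
  rw [hgl] at h2 ⊢
  simpa using h2

lemma not_nodup_split {l : List V} (h : ¬ l.Nodup) :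
    ∃ (l1 : List V) (a : V) (l2 l3 : List V), l = l1 ++ a :: (l2 ++ a :: l3) := by
  induction l with
  | nil => simp at h
  | cons b t ih =>
    rw [List.nodup_cons] at h
    push_neg at h
    by_cases hb : b ∈ t
    · obtain ⟨l2, l3, rfl⟩ := List.append_of_mem hb
      exact ⟨[], b, l2, l3, by simp⟩
    · obtain ⟨l1, a, l2, l3, rfl⟩ := ih (h hb)
      exact ⟨b :: l1, a, l2, l3, by simp⟩

lemma exists_nodup_path {v u : V} (p : List V) (hp : IsPath succ p v u) :
    ∃ q, IsPath succ q v u ∧ q.Nodup ∧ ∀ w ∈ q, w ∈ p := by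
  suffices H : ∀ (n : ℕ) (p : List V), p.length ≤ n → IsPath succ p v u →
      ∃ q, IsPath succ q v u ∧ q.Nodup ∧ ∀ w ∈ q, w ∈ p by
    exact H p.length p le_rfl hp
  intro n
  induction n with
  | zero =>
    intro p hl hp
    exact absurd (List.length_eq_zero_iff.mp (Nat.le_zero.mp hl)) hp.ne_nil
  | succ n ih =>
    intro p hl hp
    by_cases hnd : p.Nodup
    · exact ⟨p, hp, hnd, fun w hw => hw⟩
    obtain ⟨l1, a, l2, l3, rfl⟩ := not_nodup_split hnd
    have hq : IsPath succ (l1 ++ a :: l3) v u := by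
      refine ⟨?_, ?_, ?_⟩
      · unfold List.Chain'; rw [List.isChain_append]
        have hc := hp.1
        unfold List.Chain' at hc; rw [List.isChain_append] at hc
        obtain ⟨h1, h2, h3⟩ := hc
        refine ⟨h1, h2.suffix ⟨a :: l2, by simp⟩, ?_⟩
        intro x hx y hy
        exact h3 x hx y (by simpa using hy)
      · have h1 := hp.2.1
        rw [List.head?_append] at h1
        rw [List.head?_append]
        cases l1 with
        | nil => simpa using h1
        | cons c t => simpa using h1
      · have h2 := hp.2.2
        have e1 : l1 ++ a :: (l2 ++ a :: l3) = (l1 ++ a :: l2) ++ a :: l3 := by simp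
        rw [e1, List.getLast?_append] at h2
        rw [List.getLast?_append]
        have hgl := List.getLast?_eq_getLast (show a :: l3 ≠ [] by simp)
        rw [hgl] at h2 ⊢
        simpa using h2
    have hlen : (l1 ++ a :: l3).length ≤ n := by
      simp at hl ⊢; omega
    obtain ⟨q, hq', hnd', hsub⟩ := ih _ hlen hq
    refine ⟨q, hq', hnd', fun w hw => ?_⟩
    have hm := hsub w hw
    simp at hm ⊢
    tauto


lemma staysOut_defFree {V Var : Type} (G : CFG V) (Def Use : V → Set Var) (Q : Set V)
    (hcl : ClosedDD G Def Use Q) {v' v'' : V} (hv'' : v'' ∈ Q) {x : Var}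
    (hx : x ∈ Use v'') {p : List V} (hp : IsPath G.succ p v' v'')
    (hpfree : ∀ w ∈ p, w ≠ v'' → x ∉ Def w) :
    ∀ (r : List V) (a : V), IsPath G.succ r a v' → (∀ w ∈ r, w ∈ Q → w = v') →
      ∀ w ∈ r, w ≠ v'' → x ∉ Def w := by
  intro r
  induction r with
  | nil => intro a _ _ w hw; simp at hw
  | cons b r' ih =>
    intro a hr hQc w hw hne hdef
    have hb : a = b := by have := hr.2.1; simpa using this.symm
    subst hb
    have key : ∀ w ∈ r', w ≠ v'' → x ∉ Def w := by
      cases r' with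
      | nil => simp
      | cons c t =>
        refine ih c ⟨hr.1.tail, rfl, ?_⟩ (fun w hw hq => hQc w (List.mem_cons_of_mem _ hw) hq)
        rw [← List.getLast?_cons_cons (a := a)]; exact hr.2.2
    rcases List.mem_cons.mp hw with rfl | hw'
    · -- w = a (head)
      by_cases hbr : w ∈ r'
      · exact key w hbr hne hdef
      by_cases hbp : w ∈ p
      · exact hpfree w hbp hne hdef
      have hc : IsPath G.succ ((w :: r') ++ p.tail) w v'' := hr.append hp
      have hvm : v'' ∈ (w :: r') ++ p.tail := hc.last_mem
      obtain ⟨l1, l2, he, hnl1⟩ := mem_split_first hvm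
      have hs : IsPath G.succ (l1 ++ [v'']) w v'' := isPath_prefix hc he
      have hl1ne : l1 ≠ [] := by
        intro h0
        subst h0
        have hh := hs.2.1
        simp at hh
        exact hne hh.symm
      obtain ⟨h1, t1, rfl⟩ := List.exists_cons_of_ne_nil hl1ne
      have hh1 : w = h1 := by have := hs.2.1; simpa using this.symm
      subst hh1
      have heq : r' ++ p.tail = t1 ++ v'' :: l2 := by simpa using he
      have hdd : DataDep G Def Use w v'' := by
        refine ⟨x, hx, hdef, (w :: t1) ++ [v''], hs, by simp, ?_⟩
        intro u hu
        have hu' : u ∈ t1 := by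
          have : ((w :: t1) ++ [v'']).tail = t1 ++ [v''] := by simp
          rw [this, List.dropLast_concat] at hu
          exact hu
        have hune : u ≠ v'' := by
          intro h0; subst h0; exact hnl1 (List.mem_cons_of_mem _ hu')
        have hmem : u ∈ r' ++ p.tail := by
          rw [heq]; exact List.mem_append_left _ hu'
        rcases List.mem_append.mp hmem with h | h
        · exact key u h hune
        · exact hpfree u (List.mem_of_mem_tail h) hune
      have hbQ : w ∈ Q := hcl w v'' hv'' hdd
      have hbv : w = v' := hQc w List.mem_cons_self hbQ
      subst hbv
      exact hpfree w hp.head_mem hne hdef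
    · exact key w hw' hne hdef

/-- If `v'` postdominates `v`, `v` stays outside `Q` until `v'`, and `Q` is closed
under data dependence, then `rv(Q,v) = rv(Q,v')`. -/
theorem rv_staysOutside {V Var : Type} [Fintype V] (G : CFG V)
    (Def Use : V → Set Var) (Q : Set V) (v v' : V)
    (hpd : PD G v v') (hso : StaysOutside G Q v v')
    (hcl : ClosedDD G Def Use Q) :
    rv G Def Use Q v = rv G Def Use Q v' := by
  ext x
  simp only [rv, Set.mem_setOf_eq]
  constructor
  · rintro ⟨v'', hQ, hUse, p, hp, hnd, hfree⟩
    by_cases hvp : v' ∈ p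
    · obtain ⟨l1, l2, he, -⟩ := mem_split_first hvp
      refine ⟨v'', hQ, hUse, v' :: l2, isPath_suffix hp he, ?_, ?_⟩
      · exact (List.sublist_append_right l1 (v' :: l2)).nodup (he ▸ hnd)
      · intro w hw hwne
        exact hfree w (by rw [he]; exact List.mem_append_right _ hw) hwne
    · exfalso
      obtain ⟨e, he⟩ := G.reach_end v''
      have hc : IsPath G.succ (p ++ e.tail) v G.End := hp.append he
      have hv'c : v' ∈ p ++ e.tail := hpd _ hc
      obtain ⟨l1, l2, hce, hnl1⟩ := mem_split_first hv'c
      have hs : IsPath G.succ (l1 ++ [v']) v v' := isPath_prefix hc hce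
      have hQc := hso _ hs (by rw [List.dropLast_concat]; exact hnl1)
      have h1 : p <+: (p ++ e.tail) := ⟨e.tail, rfl⟩
      have h2 : (l1 ++ [v']) <+: (p ++ e.tail) := ⟨l2, by rw [hce]; simp⟩
      rcases List.prefix_or_prefix_of_prefix h1 h2 with h | h
      · have hvs : v'' ∈ l1 ++ [v'] := h.subset hp.last_mem
        have hvv : v'' = v' := hQc v'' hvs hQ
        exact hvp (hvv ▸ hp.last_mem)
      · exact hvp (h.subset (by simp))
  · rintro ⟨v'', hQ, hUse, p, hp, hnd, hfree⟩
    obtain ⟨e, he⟩ := G.reach_end v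
    have hv'e : v' ∈ e := hpd _ he
    obtain ⟨l1, l2, hee, hnl1⟩ := mem_split_first hv'e
    have hq : IsPath G.succ (l1 ++ [v']) v v' := isPath_prefix he hee
    have hQc := hso _ hq (by rw [List.dropLast_concat]; exact hnl1)
    have hkey := staysOut_defFree G Def Use Q hcl hQ hUse hp hfree (l1 ++ [v']) v hq hQc
    have hc : IsPath G.succ ((l1 ++ [v']) ++ p.tail) v v'' := hq.append hp
    obtain ⟨t, ht, htnd, htsub⟩ := exists_nodup_path _ hc
    refine ⟨v'', hQ, hUse, t, ht, htnd, ?_⟩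
    intro w hw hwne
    rcases List.mem_append.mp (htsub w hw) with h | h
    · exact hkey w h hwne
    · exact hfree w (List.mem_of_mem_tail h) hwne


end Slicing
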